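/- For every integer n ≥ 0, as real s → ∞, 1 - Q_n(s)/ζ(s) is asymptotically equivalent to p_{n+1}^{-s}; i.e., the limit of p_{n+1}^s (1 - Q_n(s)/ζ(s)) equals 1. -/

import Mathlib

open Filter Real

noncomputable def zetaR (s : ℝ) : ℝ := ∑' m : ℕ, (m : ℝ) ^ (-s)

/-- `P k` is the (k+1)-st prime: `P 0 = 2`, `P 1 = 3`, ... -/
noncomputable def P (k : ℕ) : ℕ := Nat.nth Nat.Prime k

/-- Partial Euler product `Q n s = ∏_{k=1}^n (1 - p_k^{-s})⁻¹`. -/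
noncomputable def Q (n : ℕ) (s : ℝ) : ℝ := ∏ k ∈ Finset.range n, (1 - (P k : ℝ) ^ (-s))⁻¹

namespace RatioAsymp

/-- the function summed -/
noncomputable def f (s : ℝ) (m : ℕ) : ℝ := (m : ℝ) ^ (-s)

lemma f_nonneg (s : ℝ) (m : ℕ) : 0 ≤ f s m :=
  Real.rpow_nonneg (Nat.cast_nonneg m) _

lemma f_summable {s : ℝ} (hs : 2 ≤ s) : Summable (f s) :=
  Real.summable_nat_rpow.mpr (by linarith)

noncomputable def C : ℝ := ∑' m : ℕ, (m : ℝ) ^ (-(2:ℝ))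

lemma C_summable : Summable (fun m : ℕ => (m : ℝ) ^ (-(2:ℝ))) :=
  Real.summable_nat_rpow.mpr (by norm_num)

lemma C_nonneg : 0 ≤ C := tsum_nonneg fun m => Real.rpow_nonneg (Nat.cast_nonneg m) _

/-- pointwise bound for the tail terms -/
lemma f_le {s : ℝ} (hs : 2 ≤ s) {N m : ℕ} (hN : 1 ≤ N) (hm : N ≤ m) :
    f s m ≤ (N : ℝ) ^ (2 - s) * (m : ℝ) ^ (-(2:ℝ)) := by
  have hm0 : (0:ℝ) < m := by
    have : 1 ≤ m := le_trans hN hm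
    exact_mod_cast this
  have hN0 : (0:ℝ) < N := by exact_mod_cast hN
  have h1 : f s m = (m : ℝ) ^ (2 - s) * (m : ℝ) ^ (-(2:ℝ)) := by
    rw [f, ← Real.rpow_add hm0]
    congr 1
    ring
  have h2 : (m : ℝ) ^ (2 - s) ≤ (N : ℝ) ^ (2 - s) :=
    Real.rpow_le_rpow_of_nonpos hN0 (by exact_mod_cast hm) (by linarith)
  rw [h1]
  exact mul_le_mul_of_nonneg_right h2 (Real.rpow_nonneg hm0.le _)

/-- tail sum bound -/
lemma tail_le {s : ℝ} (hs : 2 ≤ s) {N : ℕ} (hN : 1 ≤ N) :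
    ∑' m : ℕ, Set.indicator {x : ℕ | N ≤ x} (f s) m ≤ (N : ℝ) ^ (2 - s) * C := by
  have hsum1 : Summable (Set.indicator {x : ℕ | N ≤ x} (f s)) :=
    (f_summable hs).indicator _
  have hsum2 : Summable (fun m : ℕ => (N : ℝ) ^ (2 - s) * (m : ℝ) ^ (-(2:ℝ))) :=
    C_summable.mul_left _
  refine le_trans (Summable.tsum_le_tsum ?_ hsum1 hsum2) ?_
  · intro m
    by_cases h : m ∈ {x : ℕ | N ≤ x}
    · rw [Set.indicator_of_mem h]
      exact f_le hs hN h
    · rw [Set.indicator_of_notMem h]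
      positivity
  · rw [tsum_mul_left, C]

lemma tail_summable {s : ℝ} (hs : 2 ≤ s) (A : Set ℕ) :
    Summable (Set.indicator A (f s)) := (f_summable hs).indicator _

/-- `f` as a monoid hom -/
noncomputable def fh (s : ℝ) : ℕ →* ℝ where
  toFun := f s
  map_one' := by simp [f]
  map_mul' := fun a b => by
    simp only [f, Nat.cast_mul]
    exact Real.mul_rpow (Nat.cast_nonneg a) (Nat.cast_nonneg b)

lemma P_prime (k : ℕ) : (P k).Prime := Nat.nth_mem_of_infinite Nat.infinite_setOf_prime k

lemma P_inj : Function.Injective P :=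
  Nat.nth_injective Nat.infinite_setOf_prime

lemma primesBelow_P (n : ℕ) : Nat.primesBelow (P n) = (Finset.range n).image P := by
  ext q
  simp only [Nat.mem_primesBelow, Finset.mem_image, Finset.mem_range]
  constructor
  · rintro ⟨hlt, hq⟩
    refine ⟨Nat.count Nat.Prime q, ?_, Nat.nth_count hq⟩
    have h1 : Nat.nth Nat.Prime (Nat.count Nat.Prime q) < Nat.nth Nat.Prime n := by
      rwa [Nat.nth_count hq]
    exact (Nat.nth_lt_nth Nat.infinite_setOf_prime).mp h1
  · rintro ⟨k, hk, rfl⟩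
    exact ⟨(Nat.nth_lt_nth Nat.infinite_setOf_prime).mpr hk, P_prime k⟩

lemma Q_eq {s : ℝ} (hs : 2 ≤ s) (n : ℕ) :
    Q n s = ∑' m : (Nat.smoothNumbers (P n)), f s m := by
  have hsum : Summable (fh s) := f_summable hs
  have h := EulerProduct.prod_primesBelow_geometric_eq_tsum_smoothNumbers
    (f := fh s) hsum (P n)
  rw [show (⇑(fh s)) = f s from rfl] at h
  rw [← h, primesBelow_P, Finset.prod_image (fun a _ b _ hab => P_inj hab)]
  rfl

lemma zeta_summable {s : ℝ} (hs : 2 ≤ s) : Summable (f s) := f_summable hs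

lemma one_le_zeta {s : ℝ} (hs : 2 ≤ s) : 1 ≤ zetaR s := by
  have h1 : f s 1 = 1 := by simp [f]
  have := Summable.le_tsum (f_summable hs) 1 (fun j _ => f_nonneg s j)
  rw [h1] at this
  exact this

lemma not_mem_smooth (p : ℕ) (hp : p.Prime) : p ∉ Nat.smoothNumbers p := by
  intro h
  exact absurd (Nat.mem_smoothNumbers'.mp h p hp dvd_rfl) (lt_irrefl p)

/-- the error term -/
noncomputable def E (n : ℕ) (s : ℝ) : ℝ :=
  ∑' m : ℕ, Set.indicator ((Nat.smoothNumbers (P n))ᶜ \ {P n}) (f s) m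

lemma E_nonneg (n : ℕ) (s : ℝ) : 0 ≤ E n s :=
  tsum_nonneg fun m => Set.indicator_nonneg (fun j _ => f_nonneg s j) m

lemma zeta_sub_Q {s : ℝ} (hs : 2 ≤ s) (n : ℕ) :
    zetaR s - Q n s = f s (P n) + E n s := by
  set S : Set ℕ := Nat.smoothNumbers (P n) with hS
  have hzeta : zetaR s = (∑' m : ℕ, S.indicator (f s) m) + ∑' m : ℕ, Sᶜ.indicator (f s) m := by
    rw [zetaR, ← Summable.tsum_add (tail_summable hs S) (tail_summable hs Sᶜ)]
    exact tsum_congr fun m =>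
      (congrFun (Set.indicator_self_add_compl S (f s)) m).symm
  have hQ : Q n s = ∑' m : ℕ, S.indicator (f s) m := by
    rw [Q_eq hs n, tsum_subtype]
  have hsplit : Sᶜ.indicator (f s) =
      (fun m => if m = P n then f s (P n) else 0) + (Sᶜ \ {P n}).indicator (f s) := by
    funext m
    simp only [Pi.add_apply]
    by_cases hm : m = P n
    · rw [hm]
      have hmem : (P n) ∈ Sᶜ := not_mem_smooth _ (P_prime n)
      have hnot : (P n) ∉ Sᶜ \ {P n} := fun h => h.2 rfl
      rw [Set.indicator_of_mem hmem, Set.indicator_of_notMem hnot, if_pos rfl, add_zero]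
    · rw [if_neg hm]
      by_cases hmem : m ∈ Sᶜ
      · rw [Set.indicator_of_mem hmem,
          Set.indicator_of_mem ((Set.mem_diff m).mpr ⟨hmem, by simpa using hm⟩), zero_add]
      · rw [Set.indicator_of_notMem hmem,
          Set.indicator_of_notMem (fun h => hmem h.1), zero_add]
  have hsum_ite : Summable (fun m : ℕ => if m = P n then f s (P n) else 0) := by
    apply summable_of_ne_finset_zero (s := {P n})
    intro b hb
    simp only [Finset.mem_singleton] at hb
    simp [hb]
  have hcompl : ∑' m : ℕ, Sᶜ.indicator (f s) m = f s (P n) + E n s := by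
    rw [hsplit]
    simp only [Pi.add_apply]
    rw [Summable.tsum_add hsum_ite (tail_summable hs _), tsum_ite_eq (P n)]
    rfl
  rw [hzeta, hQ, hcompl]
  ring

lemma E_le_tail {s : ℝ} (hs : 2 ≤ s) (n : ℕ) :
    E n s ≤ ((P n : ℝ) + 1) ^ (2 - s) * C := by
  have hkey : E n s ≤ ∑' m : ℕ, Set.indicator {x : ℕ | P n + 1 ≤ x} (f s) m := by
    apply Summable.tsum_le_tsum _ (tail_summable hs _) (tail_summable hs _)
    intro m
    by_cases h : m ∈ (Nat.smoothNumbers (P n))ᶜ \ {P n}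
    · rcases Nat.eq_zero_or_pos m with hm0 | hm0
      · subst hm0
        rw [Set.indicator_of_mem h]
        have : f s 0 = 0 := by
          rw [f]
          simp only [Nat.cast_zero]
          exact Real.zero_rpow (by intro hc; rw [neg_eq_zero] at hc; linarith)
        rw [this]
        exact Set.indicator_nonneg (fun j _ => f_nonneg s j) _
      · have hns := h.1
        have hne := h.2
        have : ∃ q, q.Prime ∧ q ∣ m ∧ ¬ q < P n := by
          by_contra hc
          push_neg at hc
          exact hns (Nat.mem_smoothNumbers'.mpr fun q hq hqd => hc q hq hqd)
        obtain ⟨q, hq, hqd, hqn⟩ := this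
        have h1 : P n ≤ q := le_of_not_gt hqn
        have h2 : q ≤ m := Nat.le_of_dvd hm0 hqd
        have h3 : m ≠ P n := by simpa using hne
        have hmem : m ∈ {x : ℕ | P n + 1 ≤ x} := by
          have : P n ≤ m := le_trans h1 h2
          have : P n < m := lt_of_le_of_ne this (Ne.symm h3)
          exact this
        rw [Set.indicator_of_mem h, Set.indicator_of_mem hmem]
    · rw [Set.indicator_of_notMem h]
      exact Set.indicator_nonneg (fun j _ => f_nonneg s j) _
  refine le_trans hkey ?_
  have := tail_le hs (N := P n + 1) (by omega)
  simpa using this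

lemma zeta_le {s : ℝ} (hs : 2 ≤ s) : zetaR s ≤ 1 + (2:ℝ) ^ (2 - s) * C := by
  have hb : ∀ m : ℕ, f s m ≤ (if m = 1 then (1:ℝ) else 0) +
      Set.indicator {x : ℕ | 2 ≤ x} (f s) m := by
    intro m
    match m with
    | 0 =>
      have h0 : f s 0 = 0 := by
        rw [f]
        simp only [Nat.cast_zero]
        exact Real.zero_rpow (by intro hc; rw [neg_eq_zero] at hc; linarith)
      rw [h0]
      refine add_nonneg (by norm_num) (Set.indicator_nonneg (fun j _ => f_nonneg s j) 0)
    | 1 =>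
      have h1 : f s 1 = 1 := by simp [f]
      have h2 : Set.indicator {x : ℕ | 2 ≤ x} (f s) 1 = 0 :=
        Set.indicator_of_notMem (by simp) _
      rw [h1, h2]
      simp
    | (k+2) =>
      have hmem : (k+2 : ℕ) ∈ {x : ℕ | 2 ≤ x} := by simp [Set.mem_setOf_eq]
      rw [Set.indicator_of_mem hmem]
      simp
  have hsum_ite : Summable (fun m : ℕ => if m = 1 then (1:ℝ) else 0) := by
    apply summable_of_ne_finset_zero (s := {1})
    intro b hb'
    simp only [Finset.mem_singleton] at hb'
    simp [hb']
  have h1 : zetaR s ≤ ∑' m : ℕ, ((if m = 1 then (1:ℝ) else 0) +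
      Set.indicator {x : ℕ | 2 ≤ x} (f s) m) := by
    rw [zetaR]
    exact Summable.tsum_le_tsum hb (f_summable hs) (hsum_ite.add (tail_summable hs _))
  rw [Summable.tsum_add hsum_ite (tail_summable hs _), tsum_ite_eq (1:ℕ)] at h1
  have h2 := tail_le hs (N := 2) (by norm_num)
  have : ((2:ℕ):ℝ) = (2:ℝ) := by norm_num
  rw [this] at h2
  linarith

lemma rpow_base_lt_one_tendsto {b : ℝ} (hb0 : 0 ≤ b) (hb1 : b < 1) :
    Tendsto (fun s : ℝ => b ^ s) atTop (nhds 0) :=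
  tendsto_rpow_atTop_of_base_lt_one b (by linarith) hb1

/-- `a^s * (a+1)^(2-s) * C → 0` -/
lemma bound_tendsto (a : ℝ) (ha : 0 < a) :
    Tendsto (fun s : ℝ => a ^ s * ((a + 1) ^ (2 - s) * C)) atTop (nhds 0) := by
  have ha1 : (0:ℝ) < a + 1 := by linarith
  have heq : ∀ s : ℝ, a ^ s * ((a + 1) ^ (2 - s) * C) =
      ((a + 1) ^ (2:ℝ) * C) * (a / (a + 1)) ^ s := by
    intro s
    rw [Real.div_rpow ha.le ha1.le, Real.rpow_sub ha1]
    have hne : (a + 1) ^ s ≠ 0 := (Real.rpow_pos_of_pos ha1 s).ne'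
    field_simp
  have ht : Tendsto (fun s : ℝ => ((a + 1) ^ (2:ℝ) * C) * (a / (a + 1)) ^ s)
      atTop (nhds 0) := by
    have h0 : (0:ℝ) ≤ a / (a + 1) := by positivity
    have h1 : a / (a + 1) < 1 := by
      rw [div_lt_one ha1]; linarith
    have := (rpow_base_lt_one_tendsto h0 h1).const_mul ((a + 1) ^ (2:ℝ) * C)
    simpa using this
  exact ht.congr (fun s => (heq s).symm)

lemma zeta_tendsto : Tendsto zetaR atTop (nhds 1) := by
  have hupper : Tendsto (fun s : ℝ => 1 + (2:ℝ) ^ (2 - s) * C) atTop (nhds 1) := by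
    have h' : Tendsto (fun s : ℝ => (2:ℝ) ^ (2 - s) * C) atTop (nhds 0) := by
      refine (bound_tendsto 1 one_pos).congr fun s => ?_
      norm_num [Real.one_rpow]
    have := tendsto_const_nhds.add h' (f := fun _ : ℝ => (1:ℝ))
    simpa using this
  refine tendsto_of_tendsto_of_tendsto_of_le_of_le' tendsto_const_nhds hupper ?_ ?_
  · filter_upwards [eventually_ge_atTop (2:ℝ)] with s hs
    exact one_le_zeta hs
  · filter_upwards [eventually_ge_atTop (2:ℝ)] with s hs
    exact zeta_le hs

end RatioAsymp

open RatioAsymp in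
theorem ratio_asymptotic (n : ℕ) :
    Tendsto (fun s : ℝ => (P n : ℝ) ^ s * (1 - Q n s / zetaR s)) atTop (nhds 1) := by
  have hp : (P n).Prime := P_prime n
  have hp0 : (0:ℝ) < (P n : ℝ) := by exact_mod_cast hp.pos
  -- the error term tends to zero
  have hE : Tendsto (fun s : ℝ => (P n : ℝ) ^ s * E n s) atTop (nhds 0) := by
    have hupper := bound_tendsto (P n : ℝ) hp0
    refine tendsto_of_tendsto_of_tendsto_of_le_of_le' tendsto_const_nhds hupper ?_ ?_
    · filter_upwards with s
      exact mul_nonneg (Real.rpow_nonneg hp0.le s) (E_nonneg n s)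
    · filter_upwards [eventually_ge_atTop (2:ℝ)] with s hs
      exact mul_le_mul_of_nonneg_left (E_le_tail hs n) (Real.rpow_nonneg hp0.le s)
  have hnum : Tendsto (fun s : ℝ => 1 + (P n : ℝ) ^ s * E n s) atTop (nhds 1) := by
    have := tendsto_const_nhds.add hE (f := fun _ : ℝ => (1:ℝ))
    simpa using this
  have hmain : Tendsto (fun s : ℝ => (1 + (P n : ℝ) ^ s * E n s) / zetaR s)
      atTop (nhds 1) := by
    have := hnum.div zeta_tendsto one_ne_zero
    rw [div_one] at this
    exact this
  refine hmain.congr' ?_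
  filter_upwards [eventually_ge_atTop (2:ℝ)] with s hs
  have hz1 : 1 ≤ zetaR s := one_le_zeta hs
  have hz0 : zetaR s ≠ 0 := by linarith
  have hdecomp : zetaR s - Q n s = f s (P n) + E n s := zeta_sub_Q hs n
  have hfp : (P n : ℝ) ^ s * f s (P n) = 1 := by
    rw [f, ← Real.rpow_add hp0]
    simp
  have h1 : 1 - Q n s / zetaR s = (f s (P n) + E n s) / zetaR s := by
    rw [← hdecomp]
    field_simp
  rw [h1, ← mul_div_assoc, mul_add, hfp]
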